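/- Let d ∈ ℕ, let z = w(d), and let P(d) := P^z + [0, 2e_{d(z)+1}] + ... + [0, 2e_d] ⊆ ℝ^d, where P^z (of dimension d(z) = φ(z)/2 + h(z)) is embedded into ℝ^{d(z)} × {0}^{d−d(z)}. Then every interior lattice point w ∈ int(P(d)) ∩ ℤ^d satisfies ca(P(d), w) = w(d) − 1. In particular, the bound ca ≤ w(d) − 1 for deep interior lattice points of lattice parallelepipeds is best possible. -/

import Mathlib

open Pointwise

/-- The coefficient of asymmetry of a point `w` in a convex set `K`:
`ca(K,w) = min{λ ≥ 1 : w − K ⊆ λ(K − w)}`. -/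
noncomputable def ca {E : Type*} [AddCommGroup E] [Module ℝ E] (K : Set E) (w : E) : ℝ :=
  sInf {l : ℝ | 1 ≤ l ∧ ({w} : Set E) - K ⊆ l • (K - {w})}

/-- A point of `ℝ^d` all of whose coordinates are integers. -/
def IsLatticePoint {d : ℕ} (x : Fin d → ℝ) : Prop := ∀ i, ∃ z : ℤ, x i = (z : ℝ)

/-- `h(z)` is `0` if `z` is prime, and otherwise the number of distinct prime divisors. -/
def hComposite (z : ℕ) : ℕ := if z.Prime then 0 else z.primeFactors.card

/-- `w(d) = max{z ∈ ℕ : φ(z)/2 + h(z) ≤ d}`. -/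
noncomputable def wLR (d : ℕ) : ℕ :=
  sSup {z : ℕ | (z.totient : ℚ) / 2 + (hComposite z : ℚ) ≤ (d : ℚ)}

/-- The coefficient of asymmetry of a parallelepiped (image of the unit cube under a
linear equivalence) at a point whose cube-coordinates lie in `[1/Z, 1-1/Z]` with at
least one coordinate on the boundary of that interval, equals `Z - 1`. -/
lemma ca_cube {d : ℕ} (T : (Fin d → ℝ) ≃ₗ[ℝ] (Fin d → ℝ)) (Z : ℝ) (hZ : 2 ≤ Z)
    (P : Set (Fin d → ℝ)) (hP : P = ⇑T '' {t | ∀ j, t j ∈ Set.Icc (0:ℝ) 1})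
    (τ : Fin d → ℝ) (hlb : ∀ j, 1/Z ≤ τ j) (hub : ∀ j, τ j ≤ 1 - 1/Z)
    (hwit : ∃ j, τ j = 1/Z ∨ τ j = 1 - 1/Z) :
    ca P (T τ) = Z - 1 := by
  have hZ0 : (0:ℝ) < Z := by linarith
  have h1Z : (0:ℝ) < 1/Z := by positivity
  have hτcube : ∀ j, τ j ∈ Set.Icc (0:ℝ) 1 := fun j =>
    ⟨le_trans h1Z.le (hlb j), le_trans (hub j) (by linarith)⟩
  have key : {l : ℝ | 1 ≤ l ∧ ({T τ} : Set (Fin d → ℝ)) - P ⊆ l • (P - {T τ})}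
      = Set.Ici (Z - 1) := by
    ext l
    simp only [Set.mem_setOf_eq, Set.mem_Ici]
    constructor
    · rintro ⟨hl1, hsub⟩
      have hl0 : (0:ℝ) < l := by linarith
      obtain ⟨j, hj⟩ := hwit
      have main : ∀ b : ℝ, b ∈ Set.Icc (0:ℝ) 1 →
          ∃ sj : ℝ, sj ∈ Set.Icc (0:ℝ) 1 ∧ l * (sj - τ j) = τ j - b := by
        intro b hb
        set t : Fin d → ℝ := Function.update τ j b with ht
        have htc : t ∈ {t : Fin d → ℝ | ∀ j, t j ∈ Set.Icc (0:ℝ) 1} := by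
          intro i
          by_cases hij : i = j
          · subst hij; simpa [ht] using hb
          · simpa [ht, Function.update_of_ne hij] using hτcube i
        have hmem : T τ - T t ∈ ({T τ} : Set (Fin d → ℝ)) - P := by
          rw [hP]
          exact Set.sub_mem_sub rfl ⟨t, htc, rfl⟩
        obtain ⟨y, hy, hly⟩ := hsub hmem
        obtain ⟨x, hxP, u, hu, rfl⟩ := Set.mem_sub.mp hy
        rw [Set.mem_singleton_iff] at hu
        subst hu
        rw [hP] at hxP
        obtain ⟨s, hsc, rfl⟩ := hxP
        have hTeq : T (l • (s - τ)) = T (τ - t) := by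
          rw [map_smul, map_sub, map_sub]; exact hly
        have heq : l • (s - τ) = τ - t := T.injective hTeq
        have := congrFun heq j
        refine ⟨s j, hsc j, ?_⟩
        simpa [ht, mul_comm] using this
      rcases hj with hj | hj
      · obtain ⟨sj, hs, he⟩ := main 1 (by norm_num)
        rw [hj] at he
        have h0 : 0 ≤ sj := hs.1
        have he' : l * (Z * sj - 1) = 1 - Z := by
          field_simp at he; nlinarith [he]
        nlinarith [mul_nonneg (mul_nonneg hl0.le hZ0.le) h0]
      · obtain ⟨sj, hs, he⟩ := main 0 (by norm_num)
        rw [hj] at he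
        have h1 : sj ≤ 1 := hs.2
        have he' : l * (Z * sj - Z + 1) = Z - 1 := by
          field_simp at he; nlinarith [he]
        have hZs : Z * sj ≤ Z := by nlinarith
        nlinarith [mul_le_mul_of_nonneg_left hZs hl0.le]
    · intro hl
      have hl1 : (1:ℝ) ≤ l := by linarith
      have hl0 : (0:ℝ) < l := by linarith
      refine ⟨hl1, ?_⟩
      intro u hu
      obtain ⟨x, hx, y, hyP, rfl⟩ := Set.mem_sub.mp hu
      rw [Set.mem_singleton_iff] at hx
      subst hx
      rw [hP] at hyP
      obtain ⟨t, htc, rfl⟩ := hyP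
      set s : Fin d → ℝ := τ + (1/l) • (τ - t) with hs
      have hsc : s ∈ {t : Fin d → ℝ | ∀ j, t j ∈ Set.Icc (0:ℝ) 1} := by
        intro i
        have h1 := hlb i
        have h2 := hub i
        have h3 := (htc i).1
        have h4 := (htc i).2
        have hsi : s i = (l * τ i + τ i - t i) / l := by
          simp only [hs, Pi.add_apply, Pi.smul_apply, Pi.sub_apply, smul_eq_mul]
          field_simp
          ring
        have hA : (Z-1)*(1/Z) ≤ l * τ i := mul_le_mul hl h1 h1Z.le hl0.le
        have hB : (Z-1)*(1/Z) = 1 - 1/Z := by field_simp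
        have hD : 1 - 1/Z ≤ l/Z := by
          rw [le_div_iff₀ hZ0]; nlinarith
        constructor
        · rw [hsi]
          apply div_nonneg _ hl0.le
          linarith
        · rw [hsi, div_le_one hl0]
          have hC : l * τ i ≤ l * (1 - 1/Z) := mul_le_mul_of_nonneg_left h2 hl0.le
          have hE : l * (1 - 1/Z) = l - l/Z := by ring
          linarith
      refine Set.mem_smul_set.mpr ⟨T s - T τ, Set.sub_mem_sub (hP ▸ ⟨s, hsc, rfl⟩) rfl, ?_⟩
      have hTs : T s - T τ = (1/l) • (T τ - T t) := by
        rw [hs, map_add, map_smul, map_sub]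
        abel
      rw [hTs, smul_smul, mul_one_div, div_self hl0.ne', one_smul]
  unfold ca
  rw [key, csInf_Ici]

set_option maxHeartbeats 2000000 in
theorem extremal_lattice_parallelepipeds (d : ℕ) (hd : 1 ≤ d)
    (z : ℕ) (hz : z = wLR d)
    (k : ℕ) (hk : 2 * k = z.totient)
    (h : ℕ) (hh : h = hComposite z)
    (hD : k + h ≤ d)
    (a : Fin k → ℕ) (ha : StrictMono a)
    (haran : ∀ b : ℕ, (∃ i, a i = b) ↔ 1 ≤ b ∧ 2 * b ≤ z ∧ Nat.gcd b z = 1)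
    (p : Fin h → ℕ) (hp : StrictMono p)
    (hpran : ∀ q : ℕ, (∃ j, p j = q) ↔ q ∈ z.primeFactors)
    -- the generator `v^z = (z, a_2, …, a_k, z/p_1, …, z/p_h)`, embedded into `ℝ^d` by zeros
    (v : Fin d → ℕ)
    (hv0 : ∀ i : Fin d, (i : ℕ) = 0 → v i = z)
    (hva : ∀ i : Fin d, ∀ hik : (i : ℕ) < k, (i : ℕ) ≠ 0 → v i = a ⟨(i : ℕ), hik⟩)
    (hvp : ∀ i : Fin d, ∀ hik : (i : ℕ) < k + h, ∀ hki : k ≤ (i : ℕ),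
      v i = z / p ⟨(i : ℕ) - k, by omega⟩)
    (hvz : ∀ i : Fin d, k + h ≤ (i : ℕ) → v i = 0)
    -- the generators of `P(d) = P^z + [0,2e_{d(z)+1}] + … + [0,2e_d]`
    (g : Fin d → Fin d → ℝ)
    (hg0 : ∀ j : Fin d, (j : ℕ) = 0 → g j = fun i => (v i : ℝ))
    (hg1 : ∀ j : Fin d, (j : ℕ) ≠ 0 → (j : ℕ) < k + h → g j = Pi.single j 1)
    (hg2 : ∀ j : Fin d, k + h ≤ (j : ℕ) → g j = Pi.single j 2)
    (P : Set (Fin d → ℝ))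
    (hP : P = ∑ j : Fin d, segment ℝ (0 : Fin d → ℝ) (g j)) :
    ∀ w ∈ interior P, IsLatticePoint w → ca P w = (wLR d : ℝ) - 1 := by
  classical
  intro w hw hwlat
  rw [← hz]
  -- z is at least 3
  have hz3 : 3 ≤ z := by
    by_contra hlt
    push_neg at hlt
    interval_cases z
    · -- z = 0
      have hk0 : k = 0 := by simpa using hk
      have hh0 : h = 0 := by simp [hh, hComposite]
      set j0 : Fin d := ⟨0, by omega⟩ with hj0
      have h1 := hg0 j0 rfl
      have h2 := hg2 j0 (by omega)
      have h3 := hvz j0 (by omega)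
      have h4 := congrFun (h1.symm.trans h2) j0
      simp [h3, Pi.single_apply] at h4
    · simp [Nat.totient_one] at hk
    · have h2 : Nat.totient 2 = 1 := by decide
      omega
  have hk1 : 1 ≤ k := by
    have := Nat.totient_pos.mpr (show 0 < z by omega)
    omega
  have hz0r : (0:ℝ) < (z:ℝ) := by exact_mod_cast (show 0 < z by omega)
  have hzne : ((z:ℝ)) ≠ 0 := hz0r.ne'
  set i0 : Fin d := ⟨0, by omega⟩ with hi0
  have hvi0 : (v i0 : ℝ) = z := by rw [hv0 i0 rfl]
  set c : Fin d → ℝ := fun i => if (i:ℕ) < k + h then 1 else 2 with hc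
  have hcpos : ∀ i, (0:ℝ) < c i := by
    intro i; by_cases hkh : (i:ℕ) < k + h <;> simp [hc, hkh]
  have hcne : ∀ i, c i ≠ 0 := fun i => (hcpos i).ne'
  -- the linear map T and its inverse S
  set Tlin : (Fin d → ℝ) →ₗ[ℝ] (Fin d → ℝ) :=
    { toFun := fun t i => t i0 * (v i : ℝ) + (if i = i0 then 0 else c i * t i),
      map_add' := by intro t s; funext i; simp only [Pi.add_apply]; split_ifs <;> ring,
      map_smul' := by
        intro r t; funext i
        simp only [Pi.smul_apply, smul_eq_mul, RingHom.id_apply]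
        split_ifs <;> ring } with hT
  set Slin : (Fin d → ℝ) →ₗ[ℝ] (Fin d → ℝ) :=
    { toFun := fun x i => if i = i0 then x i0 / z else (x i - (x i0 / z) * v i) / c i,
      map_add' := by
        intro t s; funext i; simp only [Pi.add_apply]
        split_ifs <;> field_simp <;> ring
      map_smul' := by
        intro r t; funext i
        simp only [Pi.smul_apply, smul_eq_mul, RingHom.id_apply]
        split_ifs <;> field_simp <;> ring } with hS
  have hTapp : ∀ t i, Tlin t i = t i0 * (v i : ℝ) + (if i = i0 then 0 else c i * t i) :=
    fun t i => rfl
  have hSapp : ∀ x i, Slin x i = if i = i0 then x i0 / z else (x i - (x i0 / z) * v i) / c i :=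
    fun x i => rfl
  have hST : Slin.comp Tlin = LinearMap.id := by
    apply LinearMap.ext; intro t; funext i
    simp only [LinearMap.comp_apply, LinearMap.id_apply]
    rw [hSapp]
    by_cases hi : i = i0
    · subst hi
      rw [if_pos rfl, hTapp, if_pos rfl, hvi0]
      field_simp
      ring
    · rw [if_neg hi, hTapp, hTapp, if_pos rfl, if_neg hi, hvi0]
      field_simp [hcne i]
      all_goals ring
  have hTS : Tlin.comp Slin = LinearMap.id := by
    apply LinearMap.ext; intro x; funext i
    simp only [LinearMap.comp_apply, LinearMap.id_apply]
    rw [hTapp, hSapp, if_pos rfl]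
    by_cases hi : i = i0
    · subst hi; rw [if_pos rfl, hvi0]; field_simp; ring
    · rw [if_neg hi, hSapp, if_neg hi]
      field_simp [hcne i]
      all_goals ring
  set Tequiv : (Fin d → ℝ) ≃ₗ[ℝ] (Fin d → ℝ) := LinearEquiv.ofLinear Tlin Slin hTS hST with hTe
  have hTeApp : ∀ t, Tequiv t = Tlin t := fun t => rfl
  have hTeSymm : ∀ x, Tequiv.symm x = Slin x := fun x => rfl
  -- the value of g
  have hgval : ∀ j i, g j i = if j = i0 then (v i : ℝ) else if i = j then c j else 0 := by
    intro j i
    by_cases hj : j = i0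
    · subst hj; rw [hg0 i0 rfl, if_pos rfl]
    · have hj' : (j:ℕ) ≠ 0 := by
        intro hc'; exact hj (Fin.ext hc')
      rw [if_neg hj]
      by_cases hkh : (j:ℕ) < k + h
      · rw [hg1 j hj' hkh, Pi.single_apply]
        simp [hc, hkh]
      · rw [hg2 j (by omega), Pi.single_apply]
        simp [hc, hkh]
  -- sum formula
  have hTsum : ∀ t : Fin d → ℝ, ∑ j : Fin d, t j • g j = Tlin t := by
    intro t
    funext i
    rw [Finset.sum_apply]
    simp only [Pi.smul_apply, smul_eq_mul]
    rw [hTapp]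
    by_cases hi : i = i0
    · subst hi
      rw [if_pos rfl, add_zero]
      rw [Finset.sum_eq_single i0]
      · rw [hgval, if_pos rfl]
      · intro j _ hj
        rw [hgval, if_neg hj, if_neg (Ne.symm hj)]
        ring
      · simp
    · rw [if_neg hi]
      have hterm : ∀ j : Fin d, t j * g j i
          = (if j = i0 then t i0 * (v i : ℝ) else 0) + (if j = i then c i * t i else 0) := by
        intro j
        rw [hgval]
        by_cases hj : j = i0
        · subst hj
          rw [if_pos rfl, if_pos rfl, if_neg (Ne.symm hi), add_zero]
        · rw [if_neg hj, if_neg hj, zero_add]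
          by_cases hji : i = j
          · subst hji; rw [if_pos rfl, if_pos rfl]; ring
          · rw [if_neg hji, if_neg (Ne.symm hji)]
            ring
      rw [Finset.sum_congr rfl (fun j _ => hterm j), Finset.sum_add_distrib,
        Finset.sum_ite_eq', Finset.sum_ite_eq']
      simp
  -- P as image of the cube
  have hPT : P = ⇑Tequiv '' {t : Fin d → ℝ | ∀ j, t j ∈ Set.Icc (0:ℝ) 1} := by
    rw [hP]
    ext x
    rw [Set.mem_fintype_sum]
    constructor
    · rintro ⟨f, hf, rfl⟩
      have hseg : ∀ j, ∃ θ : ℝ, θ ∈ Set.Icc (0:ℝ) 1 ∧ f j = θ • g j := by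
        intro j
        have hj := hf j
        rw [segment_eq_image] at hj
        obtain ⟨θ, hθ, hθ2⟩ := hj
        exact ⟨θ, hθ, by rw [← hθ2]; simp⟩
      choose θ hθ1 hθ2 using hseg
      refine ⟨θ, hθ1, ?_⟩
      rw [hTeApp, ← hTsum]
      exact Finset.sum_congr rfl fun j _ => (hθ2 j).symm
    · rintro ⟨t, htc, rfl⟩
      refine ⟨fun j => t j • g j, fun j => ?_, by rw [hTeApp, ← hTsum]⟩
      rw [segment_eq_image]
      exact ⟨t j, htc j, by simp⟩
  -- interior of P
  have hcube_pi : {t : Fin d → ℝ | ∀ j, t j ∈ Set.Icc (0:ℝ) 1}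
      = Set.pi Set.univ (fun _ => Set.Icc (0:ℝ) 1) := by
    ext t; simp only [Set.mem_setOf_eq, Set.mem_pi, Set.mem_univ, true_implies]
  have hint : interior P = ⇑Tequiv '' Set.pi Set.univ (fun _ => Set.Ioo (0:ℝ) 1) := by
    rw [hPT, hcube_pi]
    have hhomeo := (Tequiv.toContinuousLinearEquiv.toHomeomorph).image_interior
      (Set.pi Set.univ (fun _ : Fin d => Set.Icc (0:ℝ) 1))
    have hco : ⇑Tequiv.toContinuousLinearEquiv.toHomeomorph = ⇑Tequiv := rfl
    rw [hco] at hhomeo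
    rw [← hhomeo, interior_pi_set Set.finite_univ]
    simp [interior_Icc]
  -- coordinates of w
  rw [hint] at hw
  obtain ⟨τ, hτmem, hwτ⟩ := hw
  have hτIoo : ∀ i, 0 < τ i ∧ τ i < 1 := by
    intro i
    have := hτmem i (Set.mem_univ i)
    exact ⟨this.1, this.2⟩
  choose W hW using hwlat
  have hτ : τ = Slin w := by
    rw [← hwτ, ← hTeSymm, LinearEquiv.symm_apply_apply]
  set m : ℤ := W i0 with hm
  have hτ0 : τ i0 = (m:ℝ)/z := by
    rw [hτ, hSapp, if_pos rfl, hW i0]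
  have hmA : 1 ≤ m := by
    have h1 := (hτIoo i0).1
    rw [hτ0] at h1
    have e : (m:ℝ) = ((m:ℝ)/z)*z := by field_simp
    have h2 : (0:ℝ) < m := by rw [e]; exact mul_pos h1 hz0r
    exact_mod_cast h2
  have hmB : m ≤ (z:ℤ) - 1 := by
    have h2 := (hτIoo i0).2
    rw [hτ0] at h2
    have h3 : (m:ℝ) < z := (div_lt_one hz0r).mp h2
    have h4 : m < (z:ℤ) := by exact_mod_cast h3
    omega
  set N : Fin d → ℤ := fun i => W i * z - m * (v i : ℤ) with hN
  have hmid : ∀ i : Fin d, i ≠ i0 → (i:ℕ) < k + h →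
      τ i = ((N i : ℤ):ℝ)/z ∧ 1 ≤ N i ∧ N i ≤ (z:ℤ) - 1 := by
    intro i hi hikh
    have hci : c i = 1 := by simp [hc, hikh]
    have hτi : τ i = ((N i : ℤ):ℝ)/z := by
      rw [hτ, hSapp, if_neg hi, hci, div_one, hW i, hW i0, hN]
      push_cast
      field_simp
      rw [hm]; ring
    have h1 := (hτIoo i).1
    have h2 := (hτIoo i).2
    rw [hτi] at h1 h2
    have h3 : (0:ℝ) < (N i : ℝ) := by
      have e : ((N i:ℤ):ℝ) = (((N i:ℤ):ℝ)/z)*z := by field_simp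
      rw [e]; exact mul_pos h1 hz0r
    have h4 : ((N i:ℤ):ℝ) < z := (div_lt_one hz0r).mp h2
    have h5 : 0 < N i := by exact_mod_cast h3
    have h6 : N i < (z:ℤ) := by exact_mod_cast h4
    exact ⟨hτi, by omega, by omega⟩
  have hhigh : ∀ i : Fin d, k + h ≤ (i:ℕ) → τ i = 1/2 := by
    intro i hikh
    have hi : i ≠ i0 := by
      rw [hi0]; intro e
      have := congrArg Fin.val e
      simp at this
      omega
    have hci : c i = 2 := by simp [hc, (show ¬ ((i:ℕ) < k + h) by omega)]
    have hvz' : v i = 0 := hvz i hikh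
    have hτi : τ i = (W i : ℝ)/2 := by
      rw [hτ, hSapp, if_neg hi, hci, hvz', hW i]
      norm_num
    have h1 := (hτIoo i).1
    have h2 := (hτIoo i).2
    rw [hτi] at h1 h2
    have h3 : (0:ℝ) < (W i : ℝ) := by linarith
    have h4 : (W i : ℝ) < 2 := by linarith
    have h5 : 0 < W i := by exact_mod_cast h3
    have h6 : W i < 2 := by exact_mod_cast h4
    have h7 : W i = 1 := by omega
    rw [hτi, h7]
    norm_num
  have hz3r : (3:ℝ) ≤ (z:ℝ) := by exact_mod_cast hz3
  have hone : 1 - 1/(z:ℝ) = ((z:ℝ)-1)/z := by field_simp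
  -- the bounds
  have hlb : ∀ j, 1/(z:ℝ) ≤ τ j := by
    intro j
    by_cases hj0 : j = i0
    · subst hj0
      rw [hτ0]
      have h1m : (1:ℝ) ≤ (m:ℝ) := by exact_mod_cast hmA
      gcongr
    · by_cases hjk : (j:ℕ) < k + h
      · obtain ⟨he, h1, _⟩ := hmid j hj0 hjk
        rw [he]
        have h1m : (1:ℝ) ≤ ((N j : ℤ):ℝ) := by exact_mod_cast h1
        gcongr
      · rw [hhigh j (by omega)]
        rw [div_le_div_iff₀ hz0r (by norm_num)]
        linarith
  have hub : ∀ j, τ j ≤ 1 - 1/(z:ℝ) := by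
    intro j
    rw [hone]
    by_cases hj0 : j = i0
    · subst hj0
      rw [hτ0]
      have h1m : (m:ℝ) ≤ (z:ℝ) - 1 := by
        have : ((m:ℤ):ℝ) ≤ (((z:ℤ) - 1 : ℤ):ℝ) := by exact_mod_cast hmB
        push_cast at this
        linarith
      gcongr
    · by_cases hjk : (j:ℕ) < k + h
      · obtain ⟨he, _, h2⟩ := hmid j hj0 hjk
        rw [he]
        have h1m : ((N j : ℤ):ℝ) ≤ (z:ℝ) - 1 := by
          have : ((N j:ℤ):ℝ) ≤ (((z:ℤ) - 1 : ℤ):ℝ) := by exact_mod_cast h2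
          push_cast at this
          linarith
        gcongr
      · rw [hhigh j (by omega)]
        rw [div_le_div_iff₀ (by norm_num : (0:ℝ) < 2) hz0r]
        linarith
  -- m is coprime to z
  set m' : ℕ := m.toNat with hm'
  have hm'z : (m' : ℤ) = m := Int.toNat_of_nonneg (by omega)
  have hcop : Nat.Coprime m' z := by
    by_contra hne
    obtain ⟨q, hq, hqd⟩ := Nat.exists_prime_and_dvd hne
    have hqm : q ∣ m' := dvd_trans hqd (Nat.gcd_dvd_left _ _)
    have hqz : q ∣ z := dvd_trans hqd (Nat.gcd_dvd_right _ _)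
    have hqpf : q ∈ z.primeFactors := Nat.mem_primeFactors.mpr ⟨hq, hqz, by omega⟩
    obtain ⟨jj, hjj⟩ := (hpran q).mpr hqpf
    have hjh : (jj:ℕ) < h := jj.2
    set i : Fin d := ⟨k + (jj:ℕ), by omega⟩ with hidef
    have hii0 : i ≠ i0 := by
      rw [hidef, hi0]
      intro e
      have := congrArg Fin.val e
      simp at this
      omega
    have hikh : (i:ℕ) < k + h := by
      show k + (jj:ℕ) < k + h
      omega
    have hik : k ≤ (i:ℕ) := by
      show k ≤ k + (jj:ℕ)
      omega
    have hvi : v i = z / q := by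
      rw [hvp i hikh hik]
      have hidx : (⟨(i:ℕ) - k, by omega⟩ : Fin h) = jj := by
        apply Fin.ext
        simp [hidef]
      rw [hidx, hjj]
    obtain ⟨hτi, hN1, hN2⟩ := hmid i hii0 hikh
    obtain ⟨m2, hm2⟩ := hqm
    have hmq : m = (q:ℤ) * (m2:ℤ) := by rw [← hm'z, hm2]; push_cast; ring
    have hzq : (q:ℤ) * ((z / q : ℕ):ℤ) = (z:ℤ) := by exact_mod_cast Nat.mul_div_cancel' hqz
    have hdvd : (z:ℤ) ∣ N i := by
      refine ⟨W i - m2, ?_⟩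
      have : N i = W i * z - m * (v i : ℤ) := rfl
      rw [this, hvi, hmq, mul_comm ((q:ℤ)) ((m2:ℤ)), mul_assoc, hzq]
      ring
    have := Int.le_of_dvd (by omega) hdvd
    omega
  -- an inverse of m mod z
  have hφ1 : 1 ≤ z.totient := Nat.totient_pos.mpr (by omega)
  set b0 : ℕ := (m' ^ (z.totient - 1)) % z with hb0
  have hmod : m' * b0 ≡ 1 [MOD z] := by
    calc m' * b0 ≡ m' * m' ^ (z.totient - 1) [MOD z] :=
          Nat.ModEq.mul_left _ (Nat.mod_modEq _ _)
    _ = m' ^ z.totient := by rw [← pow_succ']; congr 1; omega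
    _ ≡ 1 [MOD z] := Nat.ModEq.pow_totient hcop
  have hb0lt : b0 < z := Nat.mod_lt _ (by omega)
  have hb0pos : 1 ≤ b0 := by
    rcases Nat.eq_zero_or_pos b0 with hb | hb
    · exfalso
      rw [hb, mul_zero] at hmod
      have h2 : (0:ℕ) % z = 1 % z := hmod
      rw [Nat.zero_mod, Nat.mod_eq_of_lt (by omega)] at h2
      omega
    · omega
  have hcb0 : Nat.Coprime b0 z := by
    have h1 : (m' * b0) % z = 1 := by
      have h2 := hmod
      rw [Nat.ModEq] at h2
      rwa [Nat.mod_eq_of_lt (show 1 < z by omega)] at h2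
    have hg1' : Nat.gcd b0 z ∣ 1 := by
      have hA : Nat.gcd b0 z ∣ m' * b0 := Dvd.dvd.mul_left (Nat.gcd_dvd_left _ _) m'
      have hB : Nat.gcd b0 z ∣ z * (m' * b0 / z) := Dvd.dvd.mul_right (Nat.gcd_dvd_right _ _) _
      have hdm := Nat.div_add_mod (m' * b0) z
      have he : m' * b0 - z * (m' * b0 / z) = 1 := by omega
      exact he ▸ Nat.dvd_sub hA hB
    exact Nat.dvd_one.mp hg1'
  have hdvd1 : (z:ℤ) ∣ (m * b0 - 1) := by
    obtain ⟨cc, hc2⟩ := Nat.ModEq.dvd hmod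
    refine ⟨-cc, ?_⟩
    push_cast at hc2 ⊢
    rw [← hm'z]
    linarith
  -- the smallest a is 1
  have ha01 : a ⟨0, hk1⟩ = 1 := by
    obtain ⟨i1, hi1⟩ := (haran 1).mpr ⟨le_refl 1, by omega, Nat.gcd_one_left z⟩
    have hle : a ⟨0, hk1⟩ ≤ a i1 := ha.monotone (Fin.le_def.mpr (Nat.zero_le _))
    have h1le : 1 ≤ a ⟨0, hk1⟩ := ((haran (a ⟨0, hk1⟩)).mp ⟨_, rfl⟩).1
    omega
  -- the witness machine
  have hwitgen : ∀ b : ℕ, 1 ≤ b → 2*b ≤ z → Nat.Coprime b z → ∀ e : ℤ, (e = 1 ∨ e = -1) →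
      (z:ℤ) ∣ (m * b - e) → ∃ j, τ j = 1/(z:ℝ) ∨ τ j = 1 - 1/(z:ℝ) := by
    intro b hb1 hb2 hbcop e he hdvd
    obtain ⟨iA, hiA⟩ := (haran b).mpr ⟨hb1, hb2, hbcop⟩
    by_cases hiA0 : (iA:ℕ) = 0
    · have hbone : b = 1 := by
        rw [← hiA]
        have : iA = ⟨0, hk1⟩ := Fin.ext hiA0
        rw [this, ha01]
      subst hbone
      rcases he with rfl | rfl
      · -- z ∣ m - 1, so m = 1
        have hdvd' : (z:ℤ) ∣ (m - 1) := by simpa using hdvd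
        have hm1 : m = 1 := by
          by_contra hne'
          have hpos : 0 < m - 1 := by omega
          have := Int.le_of_dvd hpos hdvd'
          omega
        exact ⟨i0, Or.inl (by rw [hτ0, hm1]; norm_num)⟩
      · -- z ∣ m + 1, so m = z - 1
        have hdvd' : (z:ℤ) ∣ (m + 1) := by
          have : m * (1:ℕ) - (-1) = m + 1 := by push_cast; ring
          rwa [this] at hdvd
        have hmz : m = (z:ℤ) - 1 := by
          have := Int.le_of_dvd (by omega) hdvd'
          omega
        refine ⟨i0, Or.inr ?_⟩
        rw [hτ0, hmz, hone]
        push_cast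
        ring_nf
    · set j : Fin d := ⟨(iA:ℕ), by omega⟩ with hjdef
      have hji0 : j ≠ i0 := by
        rw [hjdef, hi0]
        intro e'
        have := congrArg Fin.val e'
        simp at this
        omega
      have hjkh : (j:ℕ) < k + h := by
        have := iA.2
        simp [hjdef]
        omega
      have hvj : v j = b := by
        rw [hva j (by simpa [hjdef] using iA.2) (by simp [hjdef, hiA0])]
        have hidx : (⟨(j:ℕ), by simpa [hjdef] using iA.2⟩ : Fin k) = iA := by
          apply Fin.ext
          simp [hjdef]
        rw [hidx, hiA]
      obtain ⟨hτj, hN1, hN2⟩ := hmid j hji0 hjkh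
      have hNval : N j = W j * z - m * b := by
        have : N j = W j * z - m * (v j : ℤ) := rfl
        rw [this, hvj]
      rcases he with rfl | rfl
      · -- N j ≡ -1, so N j = z - 1
        have hdd : (z:ℤ) ∣ (N j + 1) := by
          obtain ⟨cc, hcc⟩ := hdvd
          exact ⟨W j - cc, by rw [hNval]; linarith⟩
        have hNz : N j = (z:ℤ) - 1 := by
          have := Int.le_of_dvd (by omega) hdd
          omega
        refine ⟨j, Or.inr ?_⟩
        rw [hτj, hNz, hone]
        push_cast
        ring_nf
      · -- N j ≡ 1, so N j = 1
        have hdd : (z:ℤ) ∣ (N j - 1) := by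
          obtain ⟨cc, hcc⟩ := hdvd
          refine ⟨W j - cc, ?_⟩
          rw [hNval]
          have : m * (b:ℤ) - (-1) = (z:ℤ) * cc := hcc
          linarith
        have hNz : N j = 1 := by
          by_contra hne'
          have hpos : 0 < N j - 1 := by omega
          have := Int.le_of_dvd hpos hdd
          omega
        refine ⟨j, Or.inl ?_⟩
        rw [hτj, hNz]
        norm_num
  have hwit : ∃ j, τ j = 1/(z:ℝ) ∨ τ j = 1 - 1/(z:ℝ) := by
    by_cases h2b : 2 * b0 ≤ z
    · exact hwitgen b0 hb0pos h2b hcb0 1 (Or.inl rfl) (by simpa using hdvd1)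
    · set b1 : ℕ := z - b0 with hb1def
      have hb11 : 1 ≤ b1 := by omega
      have h2b1 : 2 * b1 ≤ z := by omega
      have hcb1 : Nat.Coprime b1 z := by
        have hA : Nat.gcd b1 z ∣ b0 := by
          have h1' : Nat.gcd b1 z ∣ z := Nat.gcd_dvd_right _ _
          have h2' : Nat.gcd b1 z ∣ b1 := Nat.gcd_dvd_left _ _
          have he : z - b1 = b0 := by omega
          exact he ▸ Nat.dvd_sub h1' h2'
        have hAB : Nat.gcd b1 z ∣ Nat.gcd b0 z := Nat.dvd_gcd hA (Nat.gcd_dvd_right _ _)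
        rw [hcb0] at hAB
        exact Nat.dvd_one.mp hAB
      refine hwitgen b1 hb11 h2b1 hcb1 (-1) (Or.inr rfl) ?_
      have hcast : (b1:ℤ) = (z:ℤ) - (b0:ℤ) := by
        rw [hb1def]
        push_cast [Nat.cast_sub (by omega : b0 ≤ z)]
        ring
      obtain ⟨cc, hc2⟩ := hdvd1
      refine ⟨m - cc, ?_⟩
      rw [hcast]
      linarith
  -- conclusion
  rw [← hwτ]
  exact ca_cube Tequiv (z:ℝ) (by linarith) P hPT τ hlb hub hwit
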